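/- Assume additionally that t ≠ 0 and t ≠ 1, and let q be any element of F. For every integer n ≥ 1, the Macdonald operator δ₁ = ∑_{i=1}^N A_i·∂_i^{(q)} applied to the power sum p_n = x_1^n + … + x_N^n (here ∂_i^{(q)} substitutes q·x_i for x_i, so that ∂_i^{(q)}(p_n) = p_n + (q^n − 1)·x_i^n) satisfies: ∑_{i=1}^N A_i · ( p_n + (q^n − 1)·x_i^n ) = ((1 − t^N)/(1 − t)) · p_n + ( t^N·(1 − q^n)/(t^n·(1 − t)) ) · F_n, where F_n is the coefficient of z^n in F(z) = ∏_{i=1}^N (1 − z·x_i)/(1 − t·z·x_i). -/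

import Mathlib

section MacdonaldAux
open Polynomial Finset

lemma geom_mul {F : Type*} [Field F] (a : F) :
    (1 - PowerSeries.C (R := F) a * PowerSeries.X) * PowerSeries.mk (fun n => a ^ n) = 1 := by
  ext k
  rw [sub_mul, one_mul, map_sub, mul_assoc]
  cases k with
  | zero => simp
  | succ k => simp [PowerSeries.coeff_succ_X_mul, PowerSeries.coeff_C_mul, pow_succ, mul_comm]

lemma aux_R {F : Type*} [Field F] {N : ℕ} (hN : 0 < N) (t : F) (ht0 : t ≠ 0)
    (x : Fin N → F) (hx : Function.Injective x) :
    C (t ^ N) * ∏ j, (X - C (x j)) =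
      (∏ j, (X - C (t * x j))) +
      C (t - 1) * ∑ i : Fin N, C (∏ j ∈ univ.erase i, (t * x i - x j) / (x i - x j)) *
        (X * ∏ j ∈ univ.erase i, (X - C (t * x j))) := by
  obtain ⟨m, rfl⟩ : ∃ m, N = m + 1 := ⟨N - 1, by omega⟩
  set A := fun i : Fin (m + 1) => ∏ j ∈ univ.erase i, (t * x i - x j) / (x i - x j) with hA
  have hcard : ∀ i : Fin (m + 1), (univ.erase i).card = m := by
    intro i
    rw [card_erase_of_mem (mem_univ i), card_univ, Fintype.card_fin]; omega
  have htx : Function.Injective (fun k : Fin (m + 1) => t * x k) := fun a b h => by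
    exact hx (mul_left_cancel₀ ht0 h)
  have hAprod : ∀ k, A k * ∏ j ∈ univ.erase k, (x k - x j)
      = ∏ j ∈ univ.erase k, (t * x k - x j) := by
    intro k
    rw [hA, ← prod_mul_distrib]
    refine prod_congr rfl fun j hj => ?_
    exact div_mul_cancel₀ _ (sub_ne_zero.2 (hx.ne (ne_of_mem_erase hj).symm))
  have hdeg1 : ∀ (s : Finset (Fin (m + 1))) (a : Fin (m + 1) → F),
      (∏ j ∈ s, (X - C (a j))).natDegree ≤ s.card := by
    intro s a
    refine (natDegree_prod_le _ _).trans ?_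
    simp only [natDegree_X_sub_C, sum_const, smul_eq_mul, mul_one, le_refl]
  have htpow : ∀ k, (∏ j ∈ univ.erase k, (t * x k - t * x j))
      = t ^ m * ∏ j ∈ univ.erase k, (x k - x j) :=  by
    intro k
    calc (∏ j ∈ univ.erase k, (t * x k - t * x j))
        = ∏ j ∈ univ.erase k, (t * (x k - x j)) := prod_congr rfl fun j _ => by ring
      _ = t ^ m * ∏ j ∈ univ.erase k, (x k - x j) := by
          rw [prod_mul_distrib, prod_const, hcard k]
  set D : F[X] := C (t ^ (m + 1)) * ∏ j, (X - C (x j)) -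
      ((∏ j, (X - C (t * x j))) +
      C (t - 1) * ∑ i : Fin (m + 1), C (A i) * (X * ∏ j ∈ univ.erase i, (X - C (t * x j)))) with hD
  suffices hD0 : D = 0 by
    have := sub_eq_zero.mp hD0
    simpa [hA] using this
  -- roots
  have hroot : ∀ k, IsRoot D (t * x k) := by
    intro k
    have e2 : (∏ j : Fin (m + 1), (t * x k - t * x j)) = 0 :=
      prod_eq_zero (mem_univ k) (sub_self _)
    have e3 : ∑ i : Fin (m + 1), A i * (t * x k * ∏ j ∈ univ.erase i, (t * x k - t * x j))
        = A k * (t * x k * ∏ j ∈ univ.erase k, (t * x k - t * x j)) := by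
      refine Finset.sum_eq_single k (fun i _ hik => ?_) (fun h => absurd (mem_univ k) h)
      have hz : (∏ j ∈ univ.erase i, (t * x k - t * x j)) = 0 :=
        prod_eq_zero (mem_erase.2 ⟨hik.symm, mem_univ k⟩) (sub_self _)
      rw [hz]; ring
    have e1 : (∏ j : Fin (m + 1), (t * x k - x j)) =
        (t * x k - x k) * ∏ j ∈ univ.erase k, (t * x k - x j) :=
      (Finset.mul_prod_erase univ _ (mem_univ k)).symm
    have h3 := hAprod k
    simp only [IsRoot.def, hD, eval_sub, eval_add, eval_mul, eval_C, eval_X, eval_prod,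
      eval_finset_sum]
    rw [e2, e3, e1, htpow k, ← h3, pow_succ]
    ring
  -- divisibility
  set M : F[X] := ∏ j, (X - C (t * x j)) with hM
  have hMmonic : M.Monic := monic_prod_of_monic _ _ fun i _ => monic_X_sub_C _
  have hMdeg : M.natDegree = m + 1 := by
    rw [hM, natDegree_prod_of_monic _ _ fun i _ => monic_X_sub_C _]
    simp only [natDegree_X_sub_C, sum_const, card_univ, Fintype.card_fin, smul_eq_mul, mul_one]
  have hdvd : M ∣ D := by
    rw [hM]
    refine Fintype.prod_dvd_of_coprime
      (Polynomial.pairwise_coprime_X_sub_C htx) fun k => ?_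
    exact dvd_iff_isRoot.2 (hroot k)
  have hdeg : D.natDegree ≤ m + 1 := by
    refine (natDegree_sub_le _ _).trans (max_le ?_ ?_)
    · exact (natDegree_C_mul_le _ _).trans ((hdeg1 univ x).trans
        (by simp only [card_univ, Fintype.card_fin, le_refl]))
    · refine (natDegree_add_le _ _).trans (max_le ?_ ?_)
      · exact (hdeg1 univ _).trans (by simp only [card_univ, Fintype.card_fin, le_refl])
      · refine (natDegree_C_mul_le _ _).trans ?_
        refine (natDegree_sum_le_of_forall_le _ _ fun i _ => ?_)
        refine (natDegree_C_mul_le _ _).trans (natDegree_mul_le.trans ?_)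
        have h2 := (hdeg1 (univ.erase i) (fun j => t * x j))
        rw [hcard i] at h2
        calc (X : F[X]).natDegree + (∏ j ∈ univ.erase i, (X - C (t * x j))).natDegree
            ≤ 1 + m := add_le_add natDegree_X_le h2
          _ = m + 1 := by omega
  -- D = M * C c
  obtain ⟨c, hc⟩ : ∃ c : F, D = M * C c := by
    obtain ⟨p, hp⟩ := hdvd
    rcases eq_or_ne p 0 with h0 | h0
    · exact ⟨0, by rw [hp, h0]; simp⟩
    · have hd2 : D.natDegree = m + 1 + p.natDegree := by
        rw [hp, natDegree_mul hMmonic.ne_zero h0, hMdeg]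
      have hp0 : p.natDegree ≤ 0 := by omega
      have hpc := Polynomial.eq_C_of_natDegree_le_zero hp0
      exact ⟨p.coeff 0, by rw [hp, ← hpc]⟩
  have hz0 : ∀ (s : Finset (Fin (m + 1))), (∏ j ∈ s, (0 - t * x j))
      = t ^ s.card * ∏ j ∈ s, (0 - x j) := by
    intro s
    calc (∏ j ∈ s, (0 - t * x j)) = ∏ j ∈ s, (t * (0 - x j)) :=
          prod_congr rfl fun j _ => by ring
      _ = t ^ s.card * ∏ j ∈ s, (0 - x j) := by rw [prod_mul_distrib, prod_const]
  -- constant coefficient of D vanishes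
  have hD00 : D.coeff 0 = 0 := by
    rw [coeff_zero_eq_eval_zero]
    simp only [hD, hM, eval_sub, eval_add, eval_mul, eval_C, eval_X, eval_prod, eval_finset_sum]
    rw [Finset.sum_eq_zero (s := (univ : Finset (Fin (m + 1))))
      (f := fun i => A i * (0 * ∏ j ∈ univ.erase i, (0 - t * x j))) (fun i _ => by ring)]
    rw [hz0 univ, card_univ, Fintype.card_fin]
    ring
  suffices hc0 : c = 0 by rw [hc, hc0, map_zero, mul_zero]
  by_cases hex : ∃ k, x k = 0
  · -- some x k = 0 : use coefficient of X^1
    obtain ⟨k, hk⟩ := hex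
    have hxj : ∀ j ∈ univ.erase k, x j ≠ 0 := by
      intro j hj h0
      exact (ne_of_mem_erase hj) (hx (h0.trans hk.symm))
    have hMk : M = X * ∏ j ∈ univ.erase k, (X - C (t * x j)) := by
      rw [hM, ← Finset.mul_prod_erase univ _ (mem_univ k), hk, mul_zero, map_zero, sub_zero]
    have hM1 : M.coeff 1 = ∏ j ∈ univ.erase k, (0 - t * x j) := by
      rw [hMk, Polynomial.coeff_X_mul, coeff_zero_eq_eval_zero, eval_prod]
      simp only [eval_sub, eval_X, eval_C]
    have hM1ne : M.coeff 1 ≠ 0 := by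
      rw [hM1]
      exact prod_ne_zero_iff.2 fun j hj => by
        rw [zero_sub, neg_ne_zero]
        exact mul_ne_zero ht0 (hxj j hj)
    have hAk : A k = 1 := by
      rw [hA]
      refine prod_eq_one fun j hj => ?_
      rw [hk, mul_zero, zero_sub]
      exact div_self (neg_ne_zero.2 (hxj j hj))
    have hD1 : D.coeff 1 = 0 := by
      have hP1 : (∏ j : Fin (m + 1), (X - C (x j)))
          = X * ∏ j ∈ univ.erase k, (X - C (x j)) := by
        rw [← Finset.mul_prod_erase univ _ (mem_univ k), hk, map_zero, sub_zero]
      simp only [hD, coeff_sub, coeff_add, coeff_C_mul, finset_sum_coeff]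
      rw [hP1, Polynomial.coeff_X_mul, coeff_zero_eq_eval_zero]
      have hsum : ∑ i : Fin (m + 1),
          A i * (X * ∏ j ∈ univ.erase i, (X - C (t * x j))).coeff 1
          = A k * ∏ j ∈ univ.erase k, (0 - t * x j) := by
        rw [Finset.sum_eq_single k]
        · rw [Polynomial.coeff_X_mul, coeff_zero_eq_eval_zero, eval_prod]
          simp only [eval_sub, eval_X, eval_C]
        · intro i _ hik
          rw [Polynomial.coeff_X_mul, coeff_zero_eq_eval_zero, eval_prod]
          simp only [eval_sub, eval_X, eval_C]
          rw [prod_eq_zero (mem_erase.2 ⟨hik.symm, mem_univ k⟩) (by rw [hk, mul_zero, sub_zero])]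
          ring
        · exact fun h => absurd (mem_univ k) h
      rw [hsum, hAk, hM1]
      simp only [eval_prod, eval_sub, eval_X, eval_C]
      rw [hz0 (univ.erase k), hcard k]
      ring
    rw [hc, coeff_mul_C] at hD1
    exact (mul_eq_zero.mp hD1).resolve_left hM1ne
  · -- all x k nonzero : use constant coefficient
    push_neg at hex
    have hM0 : M.coeff 0 ≠ 0 := by
      rw [coeff_zero_eq_eval_zero, hM, eval_prod]
      simp only [eval_sub, eval_X, eval_C]
      exact prod_ne_zero_iff.2 fun j _ => by
        rw [zero_sub, neg_ne_zero]
        exact mul_ne_zero ht0 (hex j)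
    rw [hc, coeff_mul_C] at hD00
    exact (mul_eq_zero.mp hD00).resolve_left hM0

lemma reflect_prod' {F : Type*} [Field F] {ι : Type*} (s : Finset ι) (a : ι → F) :
    Polynomial.reflect s.card (∏ j ∈ s, (X - C (a j))) = ∏ j ∈ s, (1 - C (a j) * X) := by
  induction s using Finset.cons_induction with
  | empty => simp
  | cons i s hi ih =>
    have h1 : (X - C (a i) : F[X]).natDegree ≤ 1 := (natDegree_X_sub_C _).le
    have h2 : (∏ j ∈ s, (X - C (a j))).natDegree ≤ s.card := by
      refine (Polynomial.natDegree_prod_le _ _).trans ?_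
      simp only [natDegree_X_sub_C, sum_const, smul_eq_mul, mul_one, le_refl]
    rw [Finset.prod_cons, Finset.prod_cons, Finset.card_cons, add_comm s.card 1,
      Polynomial.reflect_mul _ _ h1 h2, ih]
    congr 1
    have hre : (X - C (a i) : F[X]) = C (-(a i)) + X := by rw [map_neg]; ring
    rw [hre, Polynomial.reflect_add, Polynomial.reflect_C, ← pow_one (X : F[X]),
      Polynomial.reflect_monomial]
    simp only [map_neg, revAt_le (le_refl 1)]
    norm_num
    ring

lemma reflect_sum' {F : Type*} [Field F] {ι : Type*} (s : Finset ι) (f : ι → F[X]) (N : ℕ) :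
    Polynomial.reflect N (∑ j ∈ s, f j) = ∑ j ∈ s, Polynomial.reflect N (f j) := by
  induction s using Finset.cons_induction with
  | empty => simp
  | cons i s hi ih => rw [Finset.sum_cons, Finset.sum_cons, Polynomial.reflect_add, ih]

lemma aux_refl {F : Type*} [Field F] {N : ℕ} (hN : 0 < N) (t : F) (ht0 : t ≠ 0)
    (x : Fin N → F) (hx : Function.Injective x) :
    C (t ^ N) * ∏ j, (1 - C (x j) * X) =
      (∏ j, (1 - C (t * x j) * X)) +
      C (t - 1) * ∑ i : Fin N, C (∏ j ∈ univ.erase i, (t * x i - x j) / (x i - x j)) *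
        ∏ j ∈ univ.erase i, (1 - C (t * x j) * X) := by
  obtain ⟨m, rfl⟩ : ∃ m, N = m + 1 := ⟨N - 1, by omega⟩
  have hcard : ∀ i : Fin (m + 1), (univ.erase i).card = m := by
    intro i
    rw [card_erase_of_mem (mem_univ i), card_univ, Fintype.card_fin]; omega
  have hcu : (univ : Finset (Fin (m + 1))).card = m + 1 := by
    rw [card_univ, Fintype.card_fin]
  have h := congrArg (Polynomial.reflect (m + 1)) (aux_R hN t ht0 x hx)
  rw [Polynomial.reflect_C_mul, Polynomial.reflect_add, Polynomial.reflect_C_mul,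
    reflect_sum'] at h
  have hr1 := reflect_prod' (univ : Finset (Fin (m + 1))) x
  have hr2 := reflect_prod' (univ : Finset (Fin (m + 1))) (fun j => t * x j)
  rw [hcu] at hr1 hr2
  rw [hr1, hr2] at h
  convert h using 4 with i _
  rw [Polynomial.reflect_C_mul]
  congr 1
  have hXd : (X : F[X]).natDegree ≤ 1 := natDegree_X_le
  have h2 : (∏ j ∈ univ.erase i, (X - C (t * x j))).natDegree ≤ m := by
    refine (Polynomial.natDegree_prod_le _ _).trans ?_
    simp only [natDegree_X_sub_C, sum_const, smul_eq_mul, mul_one, hcard i, le_refl]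
  have h3 : Polynomial.reflect (1 + m) (X * ∏ j ∈ univ.erase i, (X - C (t * x j)))
      = Polynomial.reflect 1 (X : F[X]) * Polynomial.reflect m (∏ j ∈ univ.erase i, (X - C (t * x j))) :=
    Polynomial.reflect_mul _ _ hXd h2
  rw [show 1 + m = m + 1 by omega] at h3
  have hr3 := reflect_prod' (univ.erase i) (fun j => t * x j)
  rw [hcard i] at hr3
  have h4 : Polynomial.reflect 1 (X : F[X]) = 1 := by
    rw [← pow_one (X : F[X]), Polynomial.reflect_monomial]
    simp [revAt_le]
  rw [h3, hr3, h4, one_mul]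

lemma aux_ps {F : Type*} [Field F] {N : ℕ} (hN : 0 < N) (t : F) (ht0 : t ≠ 0)
    (x : Fin N → F) (hx : Function.Injective x) :
    PowerSeries.C (R := F) (t ^ N) * ∏ i, (1 - PowerSeries.C (R := F) (x i) * PowerSeries.X) =
      (∏ i, (1 - PowerSeries.C (R := F) (t * x i) * PowerSeries.X)) +
      PowerSeries.C (R := F) (t - 1) *
        ∑ i : Fin N, PowerSeries.C (R := F) (∏ j ∈ univ.erase i, (t * x i - x j) / (x i - x j)) *
          ∏ j ∈ univ.erase i, (1 - PowerSeries.C (R := F) (t * x j) * PowerSeries.X) := by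
  have h := congrArg (Polynomial.coeToPowerSeries.ringHom (R := F)) (aux_refl hN t ht0 x hx)
  simpa only [map_mul, map_add, map_sub, map_sum, map_prod, map_one,
    Polynomial.coeToPowerSeries.ringHom_apply, Polynomial.coe_C, Polynomial.coe_X] using h
end MacdonaldAux


open PowerSeries

/-- Let `F` be a field, `N` a positive integer, `t ∈ F` with `t ≠ 0`,
`t ≠ 1`, `q ∈ F`, and `x₁, …, x_N` pairwise distinct elements of `F`.  With
`A_i = ∏_{j ≠ i} (t·x_i − x_j)/(x_i − x_j)`, `p_n = x₁ⁿ + ⋯ + x_Nⁿ` and `F_n` the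
coefficient of `zⁿ` in `F(z) = ∏ (1 − z·x_i) · ∏ (1 − t·z·x_i)⁻¹`, the Macdonald operator
`δ₁ = ∑ A_i ∂_i^{(q)}` applied to `p_n` satisfies, for every `n ≥ 1`:
`∑_{i=1}^N A_i·(p_n + (qⁿ − 1)·x_iⁿ)
  = ((1 − t^N)/(1 − t))·p_n + (t^N·(1 − qⁿ)/(tⁿ·(1 − t)))·F_n`. -/
theorem macdonald_operator_on_power_sum {F : Type*} [Field F] {N : ℕ} (hN : 0 < N)
    (t : F) (ht0 : t ≠ 0) (ht1 : t ≠ 1) (q : F) (x : Fin N → F)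
    (hx : Function.Injective x) (n : ℕ) (hn : 1 ≤ n) :
    ∑ i : Fin N,
        (∏ j ∈ Finset.univ.erase i, (t * x i - x j) / (x i - x j)) *
          ((∑ k : Fin N, x k ^ n) + (q ^ n - 1) * x i ^ n)
      = (1 - t ^ N) / (1 - t) * (∑ k : Fin N, x k ^ n)
        + t ^ N * (1 - q ^ n) / (t ^ n * (1 - t)) *
            PowerSeries.coeff (R := F) n
              ((∏ i : Fin N, (1 - PowerSeries.C (R := F) (x i) * PowerSeries.X)) *
                (∏ i : Fin N, (1 - PowerSeries.C (R := F) (t * x i) * PowerSeries.X))⁻¹) := by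
  classical
  set A : Fin N → F := fun i => ∏ j ∈ Finset.univ.erase i, (t * x i - x j) / (x i - x j) with hA
  set P : PowerSeries F := ∏ i, (1 - PowerSeries.C (R := F) (x i) * PowerSeries.X) with hP
  set G : PowerSeries F := ∏ i, (1 - PowerSeries.C (R := F) (t * x i) * PowerSeries.X) with hG
  have hGc : PowerSeries.constantCoeff (R := F) G = 1 := by
    rw [hG, map_prod]
    refine Finset.prod_eq_one fun i _ => by simp
  have hPc : PowerSeries.constantCoeff (R := F) P = 1 := by
    rw [hP, map_prod]
    refine Finset.prod_eq_one fun i _ => by simp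
  have hGu : G * G⁻¹ = 1 := PowerSeries.mul_inv_cancel _ (by rw [hGc]; exact one_ne_zero)
  have hkey : PowerSeries.C (R := F) (t ^ N) * P = G + PowerSeries.C (R := F) (t - 1) *
      ∑ i : Fin N, PowerSeries.C (R := F) (A i) *
        ∏ j ∈ Finset.univ.erase i, (1 - PowerSeries.C (R := F) (t * x j) * PowerSeries.X) := by
    simp only [hA, hP, hG]
    exact aux_ps hN t ht0 x hx
  have hGi : ∀ i : Fin N,
      (∏ j ∈ Finset.univ.erase i, (1 - PowerSeries.C (R := F) (t * x j) * PowerSeries.X)) * G⁻¹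
      = PowerSeries.mk (fun k => (t * x i) ^ k) := by
    intro i
    have hfac : G = (1 - PowerSeries.C (R := F) (t * x i) * PowerSeries.X) *
        ∏ j ∈ Finset.univ.erase i, (1 - PowerSeries.C (R := F) (t * x j) * PowerSeries.X) := by
      rw [hG, ← Finset.mul_prod_erase Finset.univ _ (Finset.mem_univ i)]
    have hg := geom_mul (t * x i)
    calc (∏ j ∈ Finset.univ.erase i, (1 - PowerSeries.C (R := F) (t * x j) * PowerSeries.X)) * G⁻¹
        = (∏ j ∈ Finset.univ.erase i, (1 - PowerSeries.C (R := F) (t * x j) * PowerSeries.X)) * G⁻¹ *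
          ((1 - PowerSeries.C (R := F) (t * x i) * PowerSeries.X) *
            PowerSeries.mk (fun k => (t * x i) ^ k)) := by rw [hg, mul_one]
      _ = (G * G⁻¹) * PowerSeries.mk (fun k => (t * x i) ^ k) := by rw [hfac]; ring
      _ = PowerSeries.mk (fun k => (t * x i) ^ k) := by rw [hGu, one_mul]
  have hmain : PowerSeries.C (R := F) (t ^ N) * (P * G⁻¹)
      = 1 + PowerSeries.C (R := F) (t - 1) *
          ∑ i : Fin N, PowerSeries.C (R := F) (A i) * PowerSeries.mk (fun k => (t * x i) ^ k) := by
    calc PowerSeries.C (R := F) (t ^ N) * (P * G⁻¹) = (PowerSeries.C (R := F) (t ^ N) * P) * G⁻¹ := by ring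
      _ = (G + PowerSeries.C (R := F) (t - 1) * ∑ i : Fin N, PowerSeries.C (R := F) (A i) *
            ∏ j ∈ Finset.univ.erase i, (1 - PowerSeries.C (R := F) (t * x j) * PowerSeries.X)) * G⁻¹ := by
          rw [hkey]
      _ = G * G⁻¹ + PowerSeries.C (R := F) (t - 1) *
            ∑ i : Fin N, PowerSeries.C (R := F) (A i) *
              ((∏ j ∈ Finset.univ.erase i, (1 - PowerSeries.C (R := F) (t * x j) * PowerSeries.X)) * G⁻¹) := by
          rw [add_mul, mul_assoc, Finset.sum_mul]
          congr 2
          exact Finset.sum_congr rfl fun i _ => mul_assoc _ _ _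
      _ = 1 + PowerSeries.C (R := F) (t - 1) *
            ∑ i : Fin N, PowerSeries.C (R := F) (A i) * PowerSeries.mk (fun k => (t * x i) ^ k) := by
          rw [hGu]
          congr 2
          exact Finset.sum_congr rfl fun i _ => by rw [hGi i]
  have hn0 : n ≠ 0 := by omega
  have hS1 : t ^ N * (PowerSeries.coeff (R := F) n (P * G⁻¹)) = (t - 1) * ∑ i, A i * (t * x i) ^ n := by
    have h := congrArg (PowerSeries.coeff (R := F) n) hmain
    rw [PowerSeries.coeff_C_mul, map_add, PowerSeries.coeff_one, if_neg hn0,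
      PowerSeries.coeff_C_mul, map_sum] at h
    rw [h, zero_add]
    congr 1
    exact Finset.sum_congr rfl fun i _ => by
      rw [PowerSeries.coeff_C_mul, PowerSeries.coeff_mk]
  have hS0 : 1 + (t - 1) * ∑ i, A i = t ^ N := by
    have h := congrArg (PowerSeries.constantCoeff (R := F)) hmain
    simp only [map_mul, map_add, map_sum, map_one, PowerSeries.constantCoeff_C,
      PowerSeries.constantCoeff_mk, pow_zero, mul_one, PowerSeries.constantCoeff_inv,
      hPc, hGc, inv_one] at h
    exact h.symm
  have h1t : (1 : F) - t ≠ 0 := fun h => ht1 (sub_eq_zero.mp h).symm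
  have htn : t ^ n ≠ 0 := pow_ne_zero _ ht0
  set p := ∑ k : Fin N, x k ^ n with hp
  set Fn := PowerSeries.coeff (R := F) n (P * G⁻¹) with hFn
  have hsplit : ∑ i, A i * (p + (q ^ n - 1) * x i ^ n)
      = (∑ i, A i) * p + (q ^ n - 1) * ∑ i, A i * x i ^ n := by
    rw [Finset.sum_mul, Finset.mul_sum, ← Finset.sum_add_distrib]
    exact Finset.sum_congr rfl fun i _ => by ring
  rw [show (∑ i : Fin N, (∏ j ∈ Finset.univ.erase i, (t * x i - x j) / (x i - x j)) *
      (p + (q ^ n - 1) * x i ^ n))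
      = (∑ i, A i) * p + (q ^ n - 1) * ∑ i, A i * x i ^ n from hsplit]
  have hS1' : (t - 1) * (t ^ n * ∑ i, A i * x i ^ n) = t ^ N * Fn := by
    rw [hFn, hS1, Finset.mul_sum]
    congr 1
    exact Finset.sum_congr rfl fun i _ => by rw [mul_pow]; ring
  have e0 : (1 - t ^ N) / (1 - t) = ∑ i, A i := by
    rw [div_eq_iff h1t]
    linear_combination hS0
  have e1 : t ^ N * (1 - q ^ n) / (t ^ n * (1 - t)) * Fn = (q ^ n - 1) * ∑ i, A i * x i ^ n := by
    rw [div_mul_eq_mul_div, div_eq_iff (mul_ne_zero htn h1t)]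
    linear_combination (q ^ n - 1) * hS1'
  rw [e0, e1]
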